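/- Let s ≥ 2 and let 1 ≤ k_1 ≤ k_2 ≤ ⋯ ≤ k_s < n and 1 < l_1 ≤ l_2 ≤ ⋯ ≤ l_s ≤ n satisfy k_i < l_i and l_i − k_i + 1 ≥ m for all i. Let f_1 = X_{1,k_1} X_{2,k_1+1} ⋯ X_{m,k_1+m−1} be the τ-largest diagonal monomial of Y_{k_1 l_1}. Then the colon ideal (J_{k_1 l_1} J_{k_2 l_2} ⋯ J_{k_s l_s} : f_1) equals J_{k_2 l_2} ⋯ J_{k_s l_s}. -/

import Mathlib

open MvPolynomial Pointwise

/-- The exponent vector of the diagonal monomial with column sequence `c`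
(rows `1,…,m`, row `i` contributing the variable `X (i, c i)`). -/
noncomputable def expVec (m : ℕ) (c : ℕ → ℕ) : (ℕ × ℕ) →₀ ℕ :=
  ∑ i ∈ Finset.Icc 1 m, Finsupp.single (i, c i) 1

/-- The diagonal monomial `X_{1 c₁} X_{2 c₂} ⋯ X_{m c_m}`. -/
noncomputable def diagMon (K : Type*) [Field K] (m : ℕ) (c : ℕ → ℕ) :
    MvPolynomial (ℕ × ℕ) K :=
  ∏ i ∈ Finset.Icc 1 m, MvPolynomial.X (i, c i)

/-- `tauGt a b` : the monomial with exponent vector `a` is strictly larger than the one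
with exponent vector `b` in the lexicographic monomial order τ induced by
`X 11 > X 12 > ⋯ > X 1n > X 21 > ⋯ > X mn` : at the most significant variable where
they differ (i.e. the lexicographically smallest index pair), `a` has the bigger exponent. -/
def tauGt (a b : (ℕ × ℕ) →₀ ℕ) : Prop :=
  ∃ p : ℕ × ℕ, b p < a p ∧
    ∀ q : ℕ × ℕ, (q.1 < p.1 ∨ (q.1 = p.1 ∧ q.2 < p.2)) → a q = b q

/-- `c` is the column sequence of a diagonal monomial of the submatrix `Y_{kl}`
(columns `k` through `l`): strictly increasing on `1,…,m` with values in `[k,l]`. -/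
def IsDiagSeq (m k l : ℕ) (c : ℕ → ℕ) : Prop :=
  (∀ i, 1 ≤ i → i < m → c i < c (i + 1)) ∧ k ≤ c 1 ∧ c m ≤ l

/-- The ideal `J_{kl}` of `K[X]` generated by all diagonal monomials of `Y_{kl}`. -/
noncomputable def Jkl (K : Type*) [Field K] (m k l : ℕ) : Ideal (MvPolynomial (ℕ × ℕ) K) :=
  Ideal.span {g | ∃ c, IsDiagSeq m k l c ∧ g = diagMon K m c}

lemma diagMon_eq_monomial (K : Type*) [Field K] (m : ℕ) (c : ℕ → ℕ) :
    diagMon K m c = monomial (expVec m c) 1 := by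
  classical
  unfold diagMon expVec
  induction (Finset.Icc 1 m) using Finset.induction with
  | empty => simp
  | insert _ _ h ih =>
      rw [Finset.prod_insert h, Finset.sum_insert h, ih, X, monomial_mul, one_mul]

lemma expVec_apply (m : ℕ) (c : ℕ → ℕ) (i x : ℕ) :
    expVec m c (i, x) = if i ∈ Finset.Icc 1 m ∧ c i = x then 1 else 0 := by
  classical
  unfold expVec
  rw [Finsupp.finset_sum_apply]
  by_cases h : i ∈ Finset.Icc 1 m ∧ c i = x
  · rw [if_pos h]
    rw [Finset.sum_eq_single_of_mem i h.1]
    · simp [Finsupp.single_apply, h.2]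
    · intro b hb hbi
      simp [Finsupp.single_apply, Prod.ext_iff, hbi]
  · rw [if_neg h]
    apply Finset.sum_eq_zero
    intro b hb
    rw [Finsupp.single_apply, if_neg]
    intro hc
    rw [Prod.mk.injEq] at hc
    obtain ⟨rfl, h2⟩ := hc
    exact h ⟨hb, h2⟩

lemma diag_gap {m k l : ℕ} {c : ℕ → ℕ} (h : IsDiagSeq m k l c) :
    ∀ p q, 1 ≤ p → p ≤ q → q ≤ m → c p + (q - p) ≤ c q := by
  intro p q hp hpq
  induction q, hpq using Nat.le_induction with
  | base => intro _; omega
  | succ q hpq ih =>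
      intro hqm
      have h1 := ih (by omega)
      have h2 := h.1 q (by omega) (by omega)
      omega

lemma nested {m kj lj k1 : ℕ} {c : ℕ → ℕ} (h : IsDiagSeq m kj lj c) (hk : k1 ≤ kj)
    (hk1 : 1 ≤ k1) {i i0 : ℕ} (hi : 1 ≤ i) (hii0 : i ≤ i0) (hi0 : i0 ≤ m)
    (hc : c i0 = k1 + i0 - 1) : c i = k1 + i - 1 := by
  have h1 : c 1 + (i - 1) ≤ c i := diag_gap h 1 i le_rfl hi (by omega)
  have h2 : c i + (i0 - i) ≤ c i0 := diag_gap h i i0 hi hii0 hi0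
  have h3 : kj ≤ c 1 := h.2.1
  omega

lemma Jkl_eq_span (K : Type*) [Field K] (m k l : ℕ) :
    Jkl K m k l = Ideal.span ((fun e => monomial e (1 : K)) ''
      {e | ∃ c, IsDiagSeq m k l c ∧ e = expVec m c}) := by
  unfold Jkl
  congr 1
  ext g
  constructor
  · rintro ⟨c, hc, rfl⟩
    exact ⟨expVec m c, ⟨c, hc, rfl⟩, (diagMon_eq_monomial K m c).symm⟩
  · rintro ⟨e, ⟨c, hc, rfl⟩, rfl⟩
    exact ⟨c, hc, (diagMon_eq_monomial K m c).symm⟩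

lemma prod_Jkl_eq (K : Type*) [Field K] (m : ℕ) (k l : ℕ → ℕ) (t : Finset ℕ) :
    ∏ j ∈ t, Jkl K m (k j) (l j) =
      Ideal.span ((fun e => monomial e (1 : K)) ''
        {e | ∃ d : ℕ → ℕ → ℕ, (∀ j ∈ t, IsDiagSeq m (k j) (l j) (d j)) ∧
          e = ∑ j ∈ t, expVec m (d j)}) := by
  classical
  induction t using Finset.induction with
  | empty =>
      have : {e : (ℕ×ℕ) →₀ ℕ | ∃ d : ℕ → ℕ → ℕ,
          (∀ j ∈ (∅ : Finset ℕ), IsDiagSeq m (k j) (l j) (d j)) ∧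
          e = ∑ j ∈ (∅ : Finset ℕ), expVec m (d j)} = {0} := by
        ext e
        simp only [Set.mem_setOf_eq, Finset.notMem_empty, false_implies, implies_true,
          true_and, Finset.sum_empty, Set.mem_singleton_iff]
        exact ⟨fun ⟨_, h⟩ => h, fun h => ⟨fun _ _ => 0, h⟩⟩
      rw [Finset.prod_empty, this]
      simp [Ideal.one_eq_top, Ideal.span_singleton_one]
  | @insert a t ha ih =>
      rw [Finset.prod_insert ha, ih, Jkl_eq_span, Ideal.span_mul_span']
      congr 1
      ext x
      constructor
      · rintro ⟨-, ⟨e1, ⟨c, hc, rfl⟩, rfl⟩, -, ⟨e2, ⟨d, hd, rfl⟩, rfl⟩, rfl⟩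
        refine ⟨expVec m c + ∑ j ∈ t, expVec m (d j),
          ⟨Function.update d a c, ?_, ?_⟩, by simp [monomial_mul]⟩
        · intro j hj
          rcases Finset.mem_insert.mp hj with rfl | hj2
          · simpa using hc
          · have hne : j ≠ a := fun h => ha (h ▸ hj2)
            rw [Function.update_of_ne hne]
            exact hd j hj2
        · rw [Finset.sum_insert ha, Function.update_self]
          congr 1
          apply Finset.sum_congr rfl
          intro j hj
          have hne : j ≠ a := fun h => ha (h ▸ hj)
          rw [Function.update_of_ne hne]
      · rintro ⟨e, ⟨d, hd, rfl⟩, rfl⟩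
        rw [Finset.sum_insert ha]
        exact ⟨monomial (expVec m (d a)) 1,
          ⟨expVec m (d a), ⟨d a, hd a (Finset.mem_insert_self a t), rfl⟩, rfl⟩,
          monomial (∑ j ∈ t, expVec m (d j)) 1,
          ⟨∑ j ∈ t, expVec m (d j), ⟨d, fun j hj => hd j (Finset.mem_insert_of_mem hj), rfl⟩, rfl⟩,
          by simp [monomial_mul]⟩

lemma key_lemma (m s : ℕ) (k l : ℕ → ℕ) (hs : 2 ≤ s) (hk1 : 1 ≤ k 1)
    (hkm : ∀ j, 1 ≤ j → j ≤ s → k 1 ≤ k j) (hlm : ∀ j, 1 ≤ j → j ≤ s → l 1 ≤ l j)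
    (a : (ℕ × ℕ) →₀ ℕ) (d : ℕ → ℕ → ℕ)
    (hd : ∀ j ∈ Finset.Icc 1 s, IsDiagSeq m (k j) (l j) (d j))
    (hle : ∑ j ∈ Finset.Icc 1 s, expVec m (d j) ≤ a + expVec m (fun i => k 1 + i - 1)) :
    ∃ d' : ℕ → ℕ → ℕ, (∀ j ∈ Finset.Icc 2 s, IsDiagSeq m (k j) (l j) (d' j)) ∧
      ∑ j ∈ Finset.Icc 2 s, expVec m (d' j) ≤ a := by
  classical
  set t : ℕ → ℕ := fun j => ((Finset.Icc 1 m).filter (fun i => d j i = k 1 + i - 1)).sup id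
    with ht
  -- t j ≥ i whenever d j i = k 1 + i - 1 for i ∈ Icc 1 m
  have htA : ∀ j i, i ∈ Finset.Icc 1 m → d j i = k 1 + i - 1 → i ≤ t j := by
    intro j i hi hdi
    exact Finset.le_sup (f := id) (Finset.mem_filter.mpr ⟨hi, hdi⟩)
  have htB : ∀ j, j ∈ Finset.Icc 1 s → ∀ i, 1 ≤ i → i ≤ t j → d j i = k 1 + i - 1 := by
    intro j hj i hi hitj
    have hne : ((Finset.Icc 1 m).filter (fun i => d j i = k 1 + i - 1)).Nonempty := by
      by_contra hempty
      rw [Finset.not_nonempty_iff_eq_empty] at hempty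
      have : t j = 0 := by rw [ht]; simp [hempty]
      omega
    obtain ⟨i0, hi0mem, hi0⟩ := Finset.exists_mem_eq_sup _ hne id
    rw [Finset.mem_filter, Finset.mem_Icc] at hi0mem
    rw [id_eq] at hi0
    have hi0' : t j = i0 := hi0
    have hmem := Finset.mem_Icc.mp hj
    exact nested (hd j hj) (hkm j hmem.1 hmem.2) hk1 hi (by omega) (by omega) hi0mem.2
  -- choose jstar
  have hmain : ∀ jstar, jstar ∈ Finset.Icc 1 s → (∀ j ∈ Finset.Icc 1 s, t j ≤ t jstar) →
      (jstar = 1 ∨ 1 ≤ t jstar) →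
      ∃ d' : ℕ → ℕ → ℕ, (∀ j ∈ Finset.Icc 2 s, IsDiagSeq m (k j) (l j) (d' j)) ∧
        ∑ j ∈ Finset.Icc 2 s, expVec m (d' j) ≤ a := by
    intro jstar hjs hjmax hjalt
    refine ⟨fun j => if j = jstar then d 1 else d j, ?_, ?_⟩
    · intro j hj
      show IsDiagSeq m (k j) (l j) (if j = jstar then d 1 else d j)
      have hjm := Finset.mem_Icc.mp hj
      have hjmem1 : j ∈ Finset.Icc 1 s := Finset.mem_Icc.mpr ⟨by omega, hjm.2⟩
      by_cases hje : j = jstar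
      · rw [if_pos hje]
        have htj : 1 ≤ t j := by
          rcases hjalt with h | h
          · omega
          · rw [hje]; exact h
        have hd1 : d j 1 = k 1 := by
          have := htB j hjmem1 1 le_rfl htj
          omega
        have h1 := hd 1 (Finset.mem_Icc.mpr ⟨le_rfl, by omega⟩)
        refine ⟨h1.1, ?_, ?_⟩
        · have := (hd j hjmem1).2.1
          have := h1.2.1
          omega
        · exact le_trans h1.2.2 (hlm j (by omega) hjm.2)
      · rw [if_neg hje]
        exact hd j hjmem1
    · -- the sum inequality
      rw [Finsupp.le_def]
      intro q
      obtain ⟨i, x⟩ := q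
      rw [Finsupp.finset_sum_apply]
      show (∑ j ∈ Finset.Icc 2 s, expVec m (if j = jstar then d 1 else d j) (i, x)) ≤ a (i, x)
      -- key pointwise bound on the original sum
      have hpt : ∑ j ∈ Finset.Icc 1 s, expVec m (d j) (i, x) ≤ a (i, x)
          + expVec m (d jstar) (i, x) := by
        have hle' := hle (i, x)
        rw [Finsupp.add_apply, Finsupp.finset_sum_apply] at hle'
        by_cases hw : expVec m (fun i => k 1 + i - 1) (i, x) = 0
        · omega
        · rw [expVec_apply] at hw
          by_cases hz : ∀ j ∈ Finset.Icc 1 s, expVec m (d j) (i, x) = 0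
          · rw [Finset.sum_eq_zero hz]; omega
          · push_neg at hz
            obtain ⟨j, hjmem, hjnz⟩ := hz
            rw [expVec_apply] at hjnz
            have hcond : i ∈ Finset.Icc 1 m ∧ d j i = x := by
              by_contra hc; rw [if_neg hc] at hjnz; exact hjnz rfl
            have hwcond : i ∈ Finset.Icc 1 m ∧ x = k 1 + i - 1 := by
              by_contra hc
              apply hw
              rw [if_neg]
              intro ⟨h1, h2⟩; exact hc ⟨h1, h2.symm⟩
            have himm := Finset.mem_Icc.mp hcond.1
            have htj : i ≤ t j := htA j i hcond.1 (by omega)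
            have htjs : i ≤ t jstar := le_trans htj (hjmax j hjmem)
            have hdjs : d jstar i = k 1 + i - 1 := htB jstar hjs i himm.1 htjs
            have : expVec m (d jstar) (i, x) = 1 := by
              rw [expVec_apply, if_pos ⟨hcond.1, by omega⟩]
            have hwle : expVec m (fun i => k 1 + i - 1) (i, x) ≤ 1 := by
              rw [expVec_apply]; split <;> omega
            omega
      -- now relate the new sum to the old one
      rcases hjalt with h1 | _
      · -- jstar = 1 case : note 1 ∉ Icc 2 s
        subst h1
        have hsum : ∑ j ∈ Finset.Icc 2 s, (if j = 1 then expVec m (d 1) else expVec m (d j)) (i, x)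
            = ∑ j ∈ Finset.Icc 2 s, expVec m (d j) (i, x) := by
          apply Finset.sum_congr rfl
          intro j hj
          have : j ≠ 1 := by have := (Finset.mem_Icc.mp hj).1; omega
          rw [if_neg this]
        have hsplit : ∑ j ∈ Finset.Icc 1 s, expVec m (d j) (i, x)
            = expVec m (d 1) (i, x) + ∑ j ∈ Finset.Icc 2 s, expVec m (d j) (i, x) := by
          have : Finset.Icc 1 s = insert 1 (Finset.Icc 2 s) := by
            ext j; simp only [Finset.mem_Icc, Finset.mem_insert]; omega
          rw [this, Finset.sum_insert (by simp)]
        have : ∀ j ∈ Finset.Icc 2 s,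
            ((if j = 1 then d 1 else d j) : ℕ → ℕ) = d j := by
          intro j hj
          have : j ≠ 1 := by have := (Finset.mem_Icc.mp hj).1; omega
          rw [if_neg this]
        calc ∑ j ∈ Finset.Icc 2 s, expVec m (if j = 1 then d 1 else d j) (i, x)
            = ∑ j ∈ Finset.Icc 2 s, expVec m (d j) (i, x) := by
              apply Finset.sum_congr rfl
              intro j hj; rw [this j hj]
          _ ≤ a (i, x) := by omega
      · by_cases hcase : jstar = 1
        · -- same as before
          subst hcase
          have : ∀ j ∈ Finset.Icc 2 s,
              ((if j = 1 then d 1 else d j) : ℕ → ℕ) = d j := by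
            intro j hj
            have : j ≠ 1 := by have := (Finset.mem_Icc.mp hj).1; omega
            rw [if_neg this]
          have hsplit : ∑ j ∈ Finset.Icc 1 s, expVec m (d j) (i, x)
              = expVec m (d 1) (i, x) + ∑ j ∈ Finset.Icc 2 s, expVec m (d j) (i, x) := by
            have h2 : Finset.Icc 1 s = insert 1 (Finset.Icc 2 s) := by
              ext j; simp only [Finset.mem_Icc, Finset.mem_insert]; omega
            rw [h2, Finset.sum_insert (by simp)]
          calc ∑ j ∈ Finset.Icc 2 s, expVec m (if j = 1 then d 1 else d j) (i, x)
              = ∑ j ∈ Finset.Icc 2 s, expVec m (d j) (i, x) := by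
                apply Finset.sum_congr rfl
                intro j hj; rw [this j hj]
            _ ≤ a (i, x) := by omega
        · -- jstar ∈ Icc 2 s
          have hjs2 : jstar ∈ Finset.Icc 2 s := by
            have := Finset.mem_Icc.mp hjs
            exact Finset.mem_Icc.mpr ⟨by omega, this.2⟩
          have hsplit2 : ∑ j ∈ Finset.Icc 2 s, expVec m (if j = jstar then d 1 else d j) (i, x)
              = expVec m (d 1) (i, x)
                + ∑ j ∈ (Finset.Icc 2 s).erase jstar, expVec m (d j) (i, x) := by
            rw [← Finset.add_sum_erase _ _ hjs2, if_pos rfl]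
            congr 1
            apply Finset.sum_congr rfl
            intro j hj
            rw [if_neg (Finset.ne_of_mem_erase hj)]
          have hsplit3 : ∑ j ∈ Finset.Icc 1 s, expVec m (d j) (i, x)
              = expVec m (d 1) (i, x) + (expVec m (d jstar) (i, x)
                + ∑ j ∈ (Finset.Icc 2 s).erase jstar, expVec m (d j) (i, x)) := by
            have h2 : Finset.Icc 1 s = insert 1 (Finset.Icc 2 s) := by
              ext j; simp only [Finset.mem_Icc, Finset.mem_insert]; omega
            rw [h2, Finset.sum_insert (by simp), ← Finset.add_sum_erase _ _ hjs2]
          omega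
  -- apply hmain with a suitable jstar
  by_cases hall : ∀ j ∈ Finset.Icc 1 s, t j ≤ t 1
  · exact hmain 1 (Finset.mem_Icc.mpr ⟨le_rfl, by omega⟩) hall (Or.inl rfl)
  · push_neg at hall
    obtain ⟨j0, hj0mem, hj0⟩ := hall
    obtain ⟨jstar, hjsmem, hjsmax⟩ := Finset.exists_max_image (Finset.Icc 1 s) t
      ⟨1, Finset.mem_Icc.mpr ⟨le_rfl, by omega⟩⟩
    have h1 : t 1 < t jstar := lt_of_lt_of_le hj0 (hjsmax j0 hj0mem)
    exact hmain jstar hjsmem hjsmax (Or.inr (by omega))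

/-- Let `s ≥ 2`, `1 ≤ k₁ ≤ ⋯ ≤ k_s < n`, `1 < l₁ ≤ ⋯ ≤ l_s ≤ n` with
`k_i < l_i`, `l_i - k_i + 1 ≥ m`.  Let
`f₁ = X_{1,k₁} X_{2,k₁+1} ⋯ X_{m,k₁+m-1}` be the τ-largest diagonal monomial of
`Y_{k₁l₁}` (column sequence `i ↦ k₁ + i - 1`).  Then
`(J_{k₁l₁} J_{k₂l₂} ⋯ J_{k_sl_s} : f₁) = J_{k₂l₂} ⋯ J_{k_sl_s}`. -/
theorem stmt_11 (K : Type*) [Field K] (m n s : ℕ) (hm : 1 ≤ m) (hmn : m ≤ n) (hs : 2 ≤ s)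
    (k l : ℕ → ℕ)
    (hk1 : 1 ≤ k 1) (hkmono : ∀ j, 1 ≤ j → j < s → k j ≤ k (j + 1)) (hks : k s < n)
    (hl1 : 1 < l 1) (hlmono : ∀ j, 1 ≤ j → j < s → l j ≤ l (j + 1)) (hls : l s ≤ n)
    (hkl : ∀ j, 1 ≤ j → j ≤ s → k j < l j)
    (hlen : ∀ j, 1 ≤ j → j ≤ s → m ≤ l j - k j + 1) :
    Submodule.colon (∏ j ∈ Finset.Icc 1 s, Jkl K m (k j) (l j))
        (Ideal.span {diagMon K m (fun i => k 1 + i - 1)}) =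
      ∏ j ∈ Finset.Icc 2 s, Jkl K m (k j) (l j) := by
  classical
  have hkm : ∀ j, 1 ≤ j → j ≤ s → k 1 ≤ k j := by
    intro j hj
    induction j, hj using Nat.le_induction with
    | base => intro _; exact le_rfl
    | succ j hj ih =>
        intro hjs
        exact le_trans (ih (by omega)) (hkmono j hj (by omega))
  have hlmm : ∀ j, 1 ≤ j → j ≤ s → l 1 ≤ l j := by
    intro j hj
    induction j, hj using Nat.le_induction with
    | base => intro _; exact le_rfl
    | succ j hj ih =>
        intro hjs
        exact le_trans (ih (by omega)) (hlmono j hj (by omega))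
  set c1 : ℕ → ℕ := fun i => k 1 + i - 1 with hc1
  have hc1seq : IsDiagSeq m (k 1) (l 1) c1 := by
    refine ⟨fun i hi _ => by simp only [hc1]; omega, by simp only [hc1]; omega, ?_⟩
    have h1 := hlen 1 le_rfl (by omega)
    have h2 := hkl 1 le_rfl (by omega)
    simp only [hc1]; omega
  have hf1mem : diagMon K m c1 ∈ Jkl K m (k 1) (l 1) :=
    Ideal.subset_span ⟨c1, hc1seq, rfl⟩
  have hsplitI : Finset.Icc 1 s = insert 1 (Finset.Icc 2 s) := by
    ext j; simp only [Finset.mem_Icc, Finset.mem_insert]; omega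
  apply le_antisymm
  · -- hard direction
    intro p hp
    rw [Ideal.mem_colon_span_singleton] at hp
    rw [prod_Jkl_eq, mem_ideal_span_monomial_image] at hp ⊢
    intro xs hxs
    set w := expVec m c1 with hw
    have hxsw : xs + w ∈ (p * diagMon K m c1).support := by
      rw [diagMon_eq_monomial, MvPolynomial.mem_support_iff, ← hw, coeff_mul_monomial, mul_one]
      exact MvPolynomial.mem_support_iff.mp hxs
    obtain ⟨e, ⟨d, hd, rfl⟩, hle⟩ := hp _ hxsw
    obtain ⟨d', hd', hle'⟩ := key_lemma m s k l hs hk1 hkm hlmm xs d hd hle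
    exact ⟨∑ j ∈ Finset.Icc 2 s, expVec m (d' j), ⟨d', hd', rfl⟩, hle'⟩
  · -- easy direction
    intro p hp
    rw [Ideal.mem_colon_span_singleton]
    rw [hsplitI, Finset.prod_insert (by simp)]
    have h := Ideal.mul_mem_mul hf1mem hp
    rwa [mul_comm (diagMon K m c1) p] at h
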